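/- Let F = a₀x₀x₃² + a₁x₁x₃² + a₂x₂x₃² + x₃(a₃x₀² + a₆x₁² + a₈x₂²) + x₀³ + x₀x₁x₂ - t x₃³ (homogenization of a cubic with conic-plus-chord top part). If a₆ ≠ 0 and a₈ ≠ 0, then the surface {F = 0} in ℙ³ is smooth at every point of the hyperplane {x₃ = 0}. -/
import Mathlib


open MvPolynomial

/-- Homogenization of a cubic with conic-plus-chord top part `x₀³ + x₀x₁x₂`. -/
noncomputable def Fcpc (a0 a1 a2 a3 a6 a8 t : ℂ) : MvPolynomial (Fin 4) ℂ :=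
  C a0 * X 0 * X 3 ^ 2 + C a1 * X 1 * X 3 ^ 2 + C a2 * X 2 * X 3 ^ 2 +
    X 3 * (C a3 * X 0 ^ 2 + C a6 * X 1 ^ 2 + C a8 * X 2 ^ 2) +
    X 0 ^ 3 + X 0 * X 1 * X 2 - C t * X 3 ^ 3

/-- If `a₆ ≠ 0` and `a₈ ≠ 0` the surface `{F = 0} ⊂ ℙ³` is smooth at every point of
the hyperplane at infinity `{x₃ = 0}`. -/
theorem conic_plus_chord_smooth_at_infinity (a0 a1 a2 a3 a6 a8 : ℂ)
    (h6 : a6 ≠ 0) (h8 : a8 ≠ 0) :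
    ∀ t : ℂ, ∀ p : Fin 4 → ℂ, p ≠ 0 → p 3 = 0 →
      eval p (Fcpc a0 a1 a2 a3 a6 a8 t) = 0 →
      ∃ i : Fin 4, eval p (pderiv i (Fcpc a0 a1 a2 a3 a6 a8 t)) ≠ 0 := by
  intro t p hp h3 _
  by_contra h
  push_neg at h
  have d0 := h 0
  have d1 := h 1
  have d2 := h 2
  have d3 := h 3
  simp only [Fcpc, map_add, map_sub, map_mul, Derivation.leibniz, pderiv_X, pderiv_C,
    Derivation.leibniz_pow, eval_add, eval_sub, eval_mul, eval_pow, eval_C, eval_X,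
    smul_eq_mul, map_pow] at d0 d1 d2 d3
  simp only [Pi.single_eq_same, Pi.single_eq_of_ne (by decide : (0:Fin 4) ≠ 3),
    Pi.single_eq_of_ne (by decide : (1:Fin 4) ≠ 3), Pi.single_eq_of_ne (by decide : (2:Fin 4) ≠ 3),
    Pi.single_eq_of_ne (by decide : (3:Fin 4) ≠ 0), Pi.single_eq_of_ne (by decide : (3:Fin 4) ≠ 1),
    Pi.single_eq_of_ne (by decide : (3:Fin 4) ≠ 2),
    Pi.single_eq_of_ne (by decide : (0:Fin 4) ≠ 1), Pi.single_eq_of_ne (by decide : (0:Fin 4) ≠ 2),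
    Pi.single_eq_of_ne (by decide : (1:Fin 4) ≠ 0), Pi.single_eq_of_ne (by decide : (1:Fin 4) ≠ 2),
    Pi.single_eq_of_ne (by decide : (2:Fin 4) ≠ 0), Pi.single_eq_of_ne (by decide : (2:Fin 4) ≠ 1),
    h3] at d0 d1 d2 d3
  ring_nf at d0 d1 d2 d3
  simp only [map_ofNat, eval_mul, eval_pow, eval_X, map_one, map_zero,
    h3, mul_zero, zero_mul, add_zero, zero_add, sub_zero, mul_one] at d0 d1 d2 d3
  ring_nf at d0 d1 d2 d3
  -- d0 : 3 p0² + p1 p2 = 0 ; d1 : p0 p2 = 0 ; d2 : p0 p1 = 0 ; d3 : a3 p0² + a6 p1² + a8 p2² = 0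
  have hne : p 0 ≠ 0 ∨ p 1 ≠ 0 ∨ p 2 ≠ 0 := by
    by_contra hc
    push_neg at hc
    apply hp
    funext i
    fin_cases i <;> simp [hc.1, hc.2.1, hc.2.2, h3]
  by_cases h0 : p 0 = 0
  · rw [h0] at d0 d3
    have hpp : p 1 * p 2 = 0 := by linear_combination d0
    rcases mul_eq_zero.1 hpp with h1 | h2
    · rw [h1] at d3
      have h2 : p 2 = 0 := by
        have h' : p 2 ^ 2 * a8 = 0 := by linear_combination d3
        have : p 2 ^ 2 = 0 := by
          rcases mul_eq_zero.1 h' with h|h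
          · exact h
          · exact absurd h h8
        exact pow_eq_zero_iff (two_ne_zero) |>.1 this
      rcases hne with h|h|h <;> [exact h h0; exact h h1; exact h h2]
    · rw [h2] at d3
      have h1 : p 1 = 0 := by
        have h' : p 1 ^ 2 * a6 = 0 := by linear_combination d3
        have : p 1 ^ 2 = 0 := by
          rcases mul_eq_zero.1 h' with h|h
          · exact h
          · exact absurd h h6
        exact pow_eq_zero_iff (two_ne_zero) |>.1 this
      rcases hne with h|h|h <;> [exact h h0; exact h h1; exact h h2]
  · have h2 : p 2 = 0 := by
      rcases mul_eq_zero.1 d1 with h|h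
      · exact h
      · exact absurd h h0
    have h1 : p 1 = 0 := by
      rcases mul_eq_zero.1 d2 with h|h
      · exact h
      · exact absurd h h0
    rw [h1, h2] at d0
    apply h0
    have : p 0 ^ 2 = 0 := by linear_combination d0 / 3
    exact pow_eq_zero_iff (two_ne_zero) |>.1 this
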